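/- Let G = (V,E) be a finite simple undirected graph, let η ≥ 0, and let f be an η-locally-stable fractional edge-load assignment on G with vertex loads ℓ_v and maximum load ρ̂ = max_{v∈V} ℓ_v. For each integer i ≥ 0 define T_i = { v ∈ V : ℓ_v ≥ ρ̂ − η·i }. Then for every integer k ≥ 0, Σ_{u∈T_k} ℓ_u ≤ |E(T_{k+1})|. -/
import Mathlib


open Finset

/-- For an η-locally-stable fractional edge-load assignment with
maximum load `ρ̂` and level sets `T_i = {v : ℓ_v ≥ ρ̂ − η·i}`, for every `k ≥ 0` the
total load on `T_k` is at most `|E(T_{k+1})|`. -/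
theorem level_set_load_bound
    {V : Type*} [Fintype V] [DecidableEq V]
    (G : SimpleGraph V) [DecidableRel G.Adj]
    (η : ℝ) (hη : 0 ≤ η)
    (f : Sym2 V → V → ℝ)
    (hf_nonneg : ∀ u v : V, G.Adj u v → 0 ≤ f s(u, v) u)
    (hf_sum : ∀ u v : V, G.Adj u v → f s(u, v) u + f s(u, v) v = 1)
    (ℓ : V → ℝ)
    (hℓ : ∀ v : V, ℓ v = ∑ e ∈ G.edgeFinset.filter (fun e => v ∈ e), f e v)
    (hstab : ∀ u v : V, G.Adj u v → 0 < f s(u, v) u → ℓ u ≤ ℓ v + η)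
    (ρhat : ℝ)
    (hρhat_ub : ∀ v : V, ℓ v ≤ ρhat)
    (hρhat_mem : ∃ v : V, ℓ v = ρhat)
    (T : ℕ → Finset V)
    (hT : ∀ i : ℕ, T i = Finset.univ.filter (fun v => ρhat - η * i ≤ ℓ v)) :
    ∀ k : ℕ, ∑ u ∈ T k, ℓ u ≤
      ((G.edgeFinset.filter (fun e => e ∈ (T (k + 1)).sym2)).card : ℝ) := by

  intro k
  have hmemT : ∀ (i : ℕ) (v : V), v ∈ T i ↔ ρhat - η * i ≤ ℓ v := by
    intro i v; rw [hT]; simp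
  have hTsub : T k ⊆ T (k + 1) := by
    intro v hv
    rw [hmemT] at hv ⊢
    have h1 : η * (k : ℝ) ≤ η * ((k : ℕ) + 1 : ℕ) := by
      apply mul_le_mul_of_nonneg_left _ hη
      push_cast; linarith
    push_cast at h1 ⊢
    linarith
  have hboth : ∀ u v : V, G.Adj u v → u ∈ T k → 0 < f s(u, v) u →
      s(u, v) ∈ (T (k + 1)).sym2 := by
    intro u v hadj hu hpos
    rw [Finset.mk_mem_sym2_iff]
    refine ⟨hTsub hu, ?_⟩
    rw [hmemT] at hu ⊢
    have hst := hstab u v hadj hpos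
    have : η * (((k : ℕ) + 1 : ℕ) : ℝ) = η * k + η := by push_cast; ring
    linarith
  calc ∑ u ∈ T k, ℓ u
      = ∑ u ∈ T k, ∑ e ∈ G.edgeFinset, if u ∈ e then f e u else 0 := by
        simp_rw [hℓ, Finset.sum_filter]
    _ = ∑ e ∈ G.edgeFinset, ∑ u ∈ T k, if u ∈ e then f e u else 0 :=
        Finset.sum_comm
    _ ≤ ∑ e ∈ G.edgeFinset, (if e ∈ (T (k + 1)).sym2 then (1 : ℝ) else 0) := by
        apply Finset.sum_le_sum
        intro e he
        rw [← Finset.sum_filter]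
        revert he
        refine Sym2.inductionOn e ?_
        intro u v he
        have hadj : G.Adj u v := by
          rwa [SimpleGraph.mem_edgeFinset, SimpleGraph.mem_edgeSet] at he
        have hne : u ≠ v := hadj.ne
        have hfu : 0 ≤ f s(u, v) u := hf_nonneg u v hadj
        have hfv : 0 ≤ f s(u, v) v := by
          have := hf_nonneg v u hadj.symm
          rwa [Sym2.eq_swap] at this
        by_cases hmem : s(u, v) ∈ (T (k + 1)).sym2
        · rw [if_pos hmem]
          have hsub : (T k).filter (fun w => w ∈ s(u, v)) ⊆ {u, v} := by
            intro w hw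
            simp only [Finset.mem_filter, Sym2.mem_iff] at hw
            simp only [Finset.mem_insert, Finset.mem_singleton]
            tauto
          have h1 : ∑ w ∈ (T k).filter (fun w => w ∈ s(u, v)), f s(u, v) w
              ≤ ∑ w ∈ ({u, v} : Finset V), f s(u, v) w := by
            apply Finset.sum_le_sum_of_subset_of_nonneg hsub
            intro x hx _
            simp only [Finset.mem_insert, Finset.mem_singleton] at hx
            rcases hx with rfl | rfl
            · exact hfu
            · exact hfv
          have h2 : ∑ w ∈ ({u, v} : Finset V), f s(u, v) w = 1 := by
            rw [Finset.sum_pair hne]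
            exact hf_sum u v hadj
          linarith
        · rw [if_neg hmem]
          apply Finset.sum_nonpos
          intro w hw
          simp only [Finset.mem_filter, Sym2.mem_iff] at hw
          by_contra hpos
          push_neg at hpos
          rcases hw.2 with rfl | rfl
          · exact hmem (hboth w v hadj hw.1 hpos)
          · apply hmem
            have := hboth w u hadj.symm hw.1 (by rwa [Sym2.eq_swap])
            rwa [Sym2.eq_swap] at this
    _ = ((G.edgeFinset.filter (fun e => e ∈ (T (k + 1)).sym2)).card : ℝ) := by
        rw [Finset.sum_boole]
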